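/- In any weak Courant-Dorfman algebra, axioms (1)-(3) imply the weakened invariance axiom: ∂(⟨f, ∂⟨g,h⟩⟩ − ⟨⟦f,g⟧, h⟩ − ⟨g, ⟦f,h⟧⟩) = 0 for all f, g, h ∈ V. -/
import Mathlib

/- STATEMENT 3: In any weak Courant-Dorfman algebra (V, R, ⟨·,·⟩, ⟦·,·⟧, ∂),
axioms (1)-(3) imply ∂(⟨f,∂⟨g,h⟩⟩ − ⟨⟦f,g⟧,h⟩ − ⟨g,⟦f,h⟧⟩) = 0. -/

theorem stmt3
    (V R : Type*) [AddCommGroup V] [Module ℝ V] [AddCommGroup R] [Module ℝ R]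
    (pair : V →ₗ[ℝ] V →ₗ[ℝ] R) (br : V →ₗ[ℝ] V →ₗ[ℝ] V) (del : R →ₗ[ℝ] V)
    (hsymm : ∀ f g : V, pair f g = pair g f)
    (ax1 : ∀ f g h : V, br f (br g h) = br (br f g) h + br g (br f h))
    (ax2 : ∀ f g : V, br f g + br g f = del (pair f g))
    (ax3 : ∀ (a : R) (f : V), br (del a) f = 0) :
    ∀ f g h : V,
      del (pair f (del (pair g h)) - pair (br f g) h - pair g (br f h)) = 0 := by
  intro f g h
  have e1 : del (pair f (del (pair g h)))
      = br f (br g h) + br f (br h g) := by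
    rw [← ax2, ax3, add_zero, ← ax2, map_add]
  have e2 : del (pair (br f g) h) = br (br f g) h + br h (br f g) := (ax2 _ _).symm
  have e3 : del (pair g (br f h)) = br g (br f h) + br (br f h) g := (ax2 _ _).symm
  simp only [map_sub, e1, e2, e3, ax1 f g h, ax1 f h g]
  abel
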